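/- Let F : [a,b] → [0,1] be a continuous strictly increasing distribution function with F(a)=0, F(b)=1 and a > 0. For x ∈ [a,b) define the conditional distribution Φ(v|x) = (F(v) − F(x))/(1 − F(x)) on [x,b], with generalized inverse Φ⁻¹(s|x), and set I(x) = ∫₀¹ 1/Φ⁻¹(s|x) ds. Then I is strictly decreasing in x on [a,b). -/

import Mathlib

open Set MeasureTheory

private lemma quantSet_mem {a b : ℝ} (hab : a < b) {F : ℝ → ℝ}
    (hFc : ContinuousOn F (Icc a b)) (hFm : StrictMonoOn F (Icc a b)) (hFb : F b = 1)
    {x : ℝ} (hx : x ∈ Ico a b) {s : ℝ} (hs : s ∈ Icc (0:ℝ) 1) :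
    sInf {t | t ∈ Icc x b ∧ s ≤ (F t - F x) / (1 - F x)} ∈
      {t | t ∈ Icc x b ∧ s ≤ (F t - F x) / (1 - F x)} := by
  have hxm : x ∈ Icc a b := ⟨hx.1, hx.2.le⟩
  have hbm : b ∈ Icc a b := ⟨hab.le, le_rfl⟩
  have hFxb : F x < 1 := hFb ▸ hFm hxm hbm hx.2
  have hc : 0 < 1 - F x := by linarith
  have hbS : b ∈ {t | t ∈ Icc x b ∧ s ≤ (F t - F x) / (1 - F x)} := by
    refine ⟨⟨hx.2.le, le_rfl⟩, ?_⟩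
    rw [hFb, div_self hc.ne']
    exact hs.2
  have hcl : IsClosed {t | t ∈ Icc x b ∧ s ≤ (F t - F x) / (1 - F x)} := by
    have hcont : ContinuousOn (fun t => (F t - F x) / (1 - F x)) (Icc x b) :=
      ((hFc.mono (Icc_subset_Icc hx.1 le_rfl)).sub continuousOn_const).div_const _
    have : {t | t ∈ Icc x b ∧ s ≤ (F t - F x) / (1 - F x)} =
        Icc x b ∩ (fun t => (F t - F x) / (1 - F x)) ⁻¹' Ici s := rfl
    rw [this]
    exact hcont.preimage_isClosed_of_isClosed isClosed_Icc isClosed_Ici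
  exact hcl.csInf_mem ⟨b, hbS⟩ ⟨x, fun t ht => ht.1.1⟩

private lemma quantSet_lt_top {a b : ℝ} (hab : a < b) {F : ℝ → ℝ}
    (hFc : ContinuousOn F (Icc a b)) (hFm : StrictMonoOn F (Icc a b)) (hFb : F b = 1)
    {x : ℝ} (hx : x ∈ Ico a b) {s : ℝ} (hs : s ∈ Ioo (0:ℝ) 1) :
    sInf {t | t ∈ Icc x b ∧ s ≤ (F t - F x) / (1 - F x)} < b := by
  have hxm : x ∈ Icc a b := ⟨hx.1, hx.2.le⟩
  have hbm : b ∈ Icc a b := ⟨hab.le, le_rfl⟩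
  have hFxb : F x < 1 := hFb ▸ hFm hxm hbm hx.2
  have hc : 0 < 1 - F x := by linarith
  have hcont : ContinuousOn (fun t => (F t - F x) / (1 - F x)) (Icc x b) :=
    ((hFc.mono (Icc_subset_Icc hx.1 le_rfl)).sub continuousOn_const).div_const _
  have hIVT := intermediate_value_Icc hx.2.le hcont
  have hsmem : s ∈ Icc ((F x - F x) / (1 - F x)) ((F b - F x) / (1 - F x)) := by
    constructor
    · rw [sub_self, zero_div]; exact hs.1.le
    · rw [hFb, div_self hc.ne']; exact hs.2.le
  obtain ⟨t, htm, hts⟩ := hIVT hsmem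
  have htb : t < b := by
    rcases lt_or_eq_of_le htm.2 with h | h
    · exact h
    · exfalso
      rw [h] at hts
      simp only at hts
      rw [hFb, div_self hc.ne'] at hts
      exact hs.2.ne hts.symm
  calc sInf {t | t ∈ Icc x b ∧ s ≤ (F t - F x) / (1 - F x)} ≤ t :=
        csInf_le ⟨x, fun u hu => hu.1.1⟩ ⟨htm, hts.ge⟩
    _ < b := htb

private lemma quantSet_subset {a b : ℝ} {F : ℝ → ℝ}
    (hFm : StrictMonoOn F (Icc a b)) (hFb : F b = 1)
    {x y : ℝ} (hx : x ∈ Ico a b) (hy : y ∈ Ico a b) (hxy : x ≤ y) {s : ℝ} :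
    {t | t ∈ Icc y b ∧ s ≤ (F t - F y) / (1 - F y)} ⊆
      {t | t ∈ Icc x b ∧ s ≤ (F t - F x) / (1 - F x)} := by
  intro t ht
  obtain ⟨⟨hty, htb⟩, hts⟩ := ht
  have hxm : x ∈ Icc a b := ⟨hx.1, hx.2.le⟩
  have hym : y ∈ Icc a b := ⟨hy.1, hy.2.le⟩
  have hbm : b ∈ Icc a b := ⟨(lt_of_le_of_lt hx.1 hx.2).le.trans (le_refl b) |>.trans le_rfl, le_rfl⟩
  have htm : t ∈ Icc a b := ⟨hy.1.trans hty, htb⟩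
  have hFxy : F x ≤ F y := hFm.monotoneOn hxm hym hxy
  have hFyb : F y < 1 := hFb ▸ hFm hym ⟨hx.1.trans hx.2.le, le_rfl⟩ hy.2
  have hFxb : F x < 1 := lt_of_le_of_lt hFxy hFyb
  have hFt1 : F t ≤ 1 := hFb ▸ hFm.monotoneOn htm ⟨hx.1.trans hx.2.le, le_rfl⟩ htb
  refine ⟨⟨hxy.trans hty, htb⟩, ?_⟩
  refine le_trans hts ?_
  rw [div_le_div_iff₀ (by linarith) (by linarith)]
  nlinarith [mul_nonneg (sub_nonneg.2 hFxy) (sub_nonneg.2 hFt1)]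

private lemma quantSet_strict_lt {a b : ℝ} (hab : a < b) {F : ℝ → ℝ}
    (hFc : ContinuousOn F (Icc a b)) (hFm : StrictMonoOn F (Icc a b)) (hFb : F b = 1)
    {x y : ℝ} (hx : x ∈ Ico a b) (hy : y ∈ Ico a b) (hxy : x < y) {s : ℝ}
    (hs : s ∈ Ioo (0:ℝ) 1) :
    sInf {t | t ∈ Icc x b ∧ s ≤ (F t - F x) / (1 - F x)} <
      sInf {t | t ∈ Icc y b ∧ s ≤ (F t - F y) / (1 - F y)} := by
  set q := sInf {t | t ∈ Icc y b ∧ s ≤ (F t - F y) / (1 - F y)} with hq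
  have hqmem := quantSet_mem hab hFc hFm hFb hy (Ioo_subset_Icc_self hs)
  rw [← hq] at hqmem
  have hqb : q < b := quantSet_lt_top hab hFc hFm hFb hy hs
  have hxm : x ∈ Icc a b := ⟨hx.1, hx.2.le⟩
  have hym : y ∈ Icc a b := ⟨hy.1, hy.2.le⟩
  have hbm : b ∈ Icc a b := ⟨hab.le, le_rfl⟩
  have hqm : q ∈ Icc a b := ⟨hy.1.trans hqmem.1.1, hqmem.1.2⟩
  have hFxy : F x < F y := hFm hxm hym hxy
  have hFyb : F y < 1 := hFb ▸ hFm hym hbm hy.2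
  have hFq1 : F q < 1 := hFb ▸ hFm hqm hbm hqb
  have hFxq : F x < F q := hFm hxm hqm (lt_of_lt_of_le hxy hqmem.1.1)
  -- Φ(q|x) > Φ(q|y) ≥ s
  have hkey : s < (F q - F x) / (1 - F x) := by
    refine lt_of_le_of_lt hqmem.2 ?_
    rw [div_lt_div_iff₀ (by linarith) (by linarith)]
    nlinarith [mul_pos (sub_pos.2 hFxy) (sub_pos.2 hFq1)]
  -- IVT on [x, q]
  have hxq : x ≤ q := hxy.le.trans hqmem.1.1
  have hcont : ContinuousOn (fun t => (F t - F x) / (1 - F x)) (Icc x q) :=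
    ((hFc.mono (Icc_subset_Icc hx.1 hqm.2)).sub continuousOn_const).div_const _
  have hIVT := intermediate_value_Icc hxq hcont
  have hsmem : s ∈ Icc ((F x - F x) / (1 - F x)) ((F q - F x) / (1 - F x)) := by
    constructor
    · rw [sub_self, zero_div]; exact hs.1.le
    · exact hkey.le
  obtain ⟨t, htm, hts⟩ := hIVT hsmem
  have htq : t < q := by
    rcases lt_or_eq_of_le htm.2 with h | h
    · exact h
    · exfalso; rw [h] at hts; exact hkey.ne' hts
  calc sInf {t | t ∈ Icc x b ∧ s ≤ (F t - F x) / (1 - F x)} ≤ t :=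
        csInf_le ⟨x, fun u hu => hu.1.1⟩ ⟨⟨htm.1, htm.2.trans hqm.2⟩, hts.ge⟩
    _ < q := htq

/-- The reciprocal-quantile integral `I(x) = ∫₀¹ 1/Φ⁻¹(s|x) ds` of the distribution
conditional on values `≥ x` is strictly decreasing in the truncation point `x`. -/
theorem condQuantileIntegral_strictAnti (a b : ℝ) (ha : 0 < a) (hab : a < b)
    (F : ℝ → ℝ) (hFc : ContinuousOn F (Icc a b)) (hFm : StrictMonoOn F (Icc a b))
    (hFa : F a = 0) (hFb : F b = 1)
    (Φ : ℝ → ℝ → ℝ) (hΦ : ∀ x ∈ Ico a b, ∀ v : ℝ, Φ v x = (F v - F x) / (1 - F x))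
    (Φinv : ℝ → ℝ → ℝ)
    (hΦinv : ∀ x ∈ Ico a b, ∀ s : ℝ, Φinv s x = sInf {t | t ∈ Icc x b ∧ s ≤ Φ t x})
    (I : ℝ → ℝ) (hI : ∀ x ∈ Ico a b, I x = ∫ s in (0:ℝ)..1, 1 / Φinv s x) :
    StrictAntiOn I (Ico a b) := by
  intro x hx y hy hxy
  rw [hI x hx, hI y hy]
  set g : ℝ → ℝ := fun s => sInf {t | t ∈ Icc x b ∧ s ≤ (F t - F x) / (1 - F x)} with hgdef
  set h : ℝ → ℝ := fun s => sInf {t | t ∈ Icc y b ∧ s ≤ (F t - F y) / (1 - F y)} with hhdef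
  have hgx : ∀ s, Φinv s x = g s := by
    intro s
    rw [hΦinv x hx]
    congr 1
    ext t
    simp only [Set.mem_setOf_eq, hΦ x hx t]
  have hhy : ∀ s, Φinv s y = h s := by
    intro s
    rw [hΦinv y hy]
    congr 1
    ext t
    simp only [Set.mem_setOf_eq, hΦ y hy t]
  simp only [hgx, hhy]
  rw [intervalIntegral.integral_of_le (by norm_num : (0:ℝ) ≤ 1),
      intervalIntegral.integral_of_le (by norm_num : (0:ℝ) ≤ 1)]
  -- basic bounds for g and h on [0,1]
  have hgmem : ∀ s ∈ Icc (0:ℝ) 1, g s ∈ Icc x b := fun s hs =>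
    (quantSet_mem hab hFc hFm hFb hx hs).1
  have hhmem : ∀ s ∈ Icc (0:ℝ) 1, h s ∈ Icc y b := fun s hs =>
    (quantSet_mem hab hFc hFm hFb hy hs).1
  have hgpos : ∀ s ∈ Icc (0:ℝ) 1, 0 < g s := fun s hs =>
    lt_of_lt_of_le ha (hx.1.trans (hgmem s hs).1)
  have hhpos : ∀ s ∈ Icc (0:ℝ) 1, 0 < h s := fun s hs =>
    lt_of_lt_of_le ha (hy.1.trans (hhmem s hs).1)
  have hgh : ∀ s ∈ Icc (0:ℝ) 1, g s ≤ h s := by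
    intro s hs
    exact csInf_le_csInf ⟨x, fun u hu => hu.1.1⟩
      ⟨h s, quantSet_mem hab hFc hFm hFb hy hs⟩
      (quantSet_subset hFm hFb hx hy hxy.le)
  have hghlt : ∀ s ∈ Ioo (0:ℝ) 1, g s < h s := fun s hs =>
    quantSet_strict_lt hab hFc hFm hFb hx hy hxy hs
  -- monotonicity of g, h on [0,1], hence measurability
  have hgmono : MonotoneOn g (Icc (0:ℝ) 1) := by
    intro s hs s' hs' hss'
    refine csInf_le_csInf ⟨x, fun u hu => hu.1.1⟩
      ⟨g s', quantSet_mem hab hFc hFm hFb hx hs'⟩ ?_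
    intro t ht
    exact ⟨ht.1, hss'.trans ht.2⟩
  have hhmono : MonotoneOn h (Icc (0:ℝ) 1) := by
    intro s hs s' hs' hss'
    refine csInf_le_csInf ⟨y, fun u hu => hu.1.1⟩
      ⟨h s', quantSet_mem hab hFc hFm hFb hy hs'⟩ ?_
    intro t ht
    exact ⟨ht.1, hss'.trans ht.2⟩
  have hint : ∀ (k : ℝ → ℝ), MonotoneOn k (Icc (0:ℝ) 1) →
      (∀ s ∈ Icc (0:ℝ) 1, 0 < k s) → IntegrableOn (fun s => 1 / k s) (Ioc (0:ℝ) 1) := by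
    intro k hk hkpos
    have hmeas : AEMeasurable k (volume.restrict (Ioc (0:ℝ) 1)) :=
      aemeasurable_restrict_of_monotoneOn measurableSet_Ioc
        (hk.mono Ioc_subset_Icc_self)
    have hmeas' : AEMeasurable (fun s => 1 / k s) (volume.restrict (Ioc (0:ℝ) 1)) := by
      exact hmeas.inv.congr (ae_of_all _ fun s => by simp [one_div])
    refine ⟨hmeas'.aestronglyMeasurable, ?_⟩
    apply MeasureTheory.HasFiniteIntegral.restrict_of_bounded
      (C := 1 / k 0) measure_Ioc_lt_top
    refine (ae_restrict_iff' measurableSet_Ioc).2 (ae_of_all _ fun s hs => ?_)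
    have hs01 : s ∈ Icc (0:ℝ) 1 := Ioc_subset_Icc_self hs
    have h0 : 0 < k 0 := hkpos 0 (by norm_num)
    have hks : 0 < k s := hkpos s hs01
    have hmono' : k 0 ≤ k s := hk (by norm_num) hs01 hs.1.le
    rw [Real.norm_eq_abs, abs_of_pos (by positivity)]
    exact one_div_le_one_div_of_le h0 hmono'
  have hintg := hint g hgmono hgpos
  have hinth := hint h hhmono hhpos
  -- strict inequality of integrals
  have hdiff : 0 < ∫ s in Ioc (0:ℝ) 1, (1 / g s - 1 / h s) := by
    rw [MeasureTheory.setIntegral_pos_iff_support_of_nonneg_ae]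
    · have hsub : Ioo (0:ℝ) 1 ⊆
          Function.support (fun s => 1 / g s - 1 / h s) ∩ Ioc 0 1 := by
        intro s hs
        have hs01 : s ∈ Icc (0:ℝ) 1 := Ioo_subset_Icc_self hs
        refine ⟨?_, Ioo_subset_Ioc_self hs⟩
        have h1 : 1 / h s < 1 / g s :=
          one_div_lt_one_div_of_lt (hgpos s hs01) (hghlt s hs)
        simp only [Function.mem_support]
        intro hcontra
        have : 1 / g s = 1 / h s := by linarith [sub_eq_zero.1 hcontra]
        linarith
      calc (0:ENNReal) < volume (Ioo (0:ℝ) 1) := by rw [Real.volume_Ioo]; norm_num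
        _ ≤ _ := measure_mono hsub
    · refine (ae_restrict_iff' measurableSet_Ioc).2 (ae_of_all _ fun s hs => ?_)
      have hs01 : s ∈ Icc (0:ℝ) 1 := Ioc_subset_Icc_self hs
      have := one_div_le_one_div_of_le (hgpos s hs01) (hgh s hs01)
      simp only [Pi.zero_apply]
      linarith
    · exact hintg.sub hinth
  have := MeasureTheory.integral_sub hintg hinth
  rw [this] at hdiff
  linarith
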